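/- Let V₁,…,V_N be modules over a Lie algebra 𝔤, with {I_a} a basis of 𝔤 and {I^a} its dual basis for a nondegenerate invariant symmetric bilinear form. For pairwise distinct z₁,…,z_N ∈ ℂ, the quadratic Gaudin Hamiltonians H_i := ∑_{j≠i} ∑_a I^{a(i)} I_a^{(j)}/(z_i - z_j) ∈ U(𝔤)^{⊗N} pairwise commute: [H_i, H_j] = 0 for all i, j. -/

import Mathlib

open DirectSum

attribute [local instance] LieRing.ofAssociativeRing
open DirectSum

section GaudinAux

variable {L : Type*} [LieRing L] [LieAlgebra ℂ L]
  {ι : Type*} [Fintype ι] [DecidableEq ι]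

theorem gaudin_lie_sum {A : Type*} [LieRing A] {α : Type*} (s : Finset α) (g : α → A) (x : A) :
    ⁅x, ∑ a ∈ s, g a⁆ = ∑ a ∈ s, ⁅x, g a⁆ :=
  map_sum (⟨⟨fun y => ⁅x, y⁆, lie_zero x⟩, fun a b => lie_add x a b⟩ : A →+ A) g s

theorem gaudin_sum_lie {A : Type*} [LieRing A] {α : Type*} (s : Finset α) (g : α → A) (x : A) :
    ⁅∑ a ∈ s, g a, x⁆ = ∑ a ∈ s, ⁅g a, x⁆ :=
  map_sum (⟨⟨fun y => ⁅y, x⁆, zero_lie x⟩, fun a b => add_lie a b x⟩ : A →+ A) g s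

theorem gaudin_expand (B : LinearMap.BilinForm ℂ L) (e f : ι → L)
    (he : ∀ i j, B (f i) (e j) = if i = j then 1 else 0)
    (hbasis : Submodule.span ℂ (Set.range e) = ⊤) (x : L) :
    ∑ a, B (f a) x • e a = x := by
  have h : (∑ a, (B (f a)).smulRight (e a)) = (LinearMap.id : L →ₗ[ℂ] L) := by
    apply LinearMap.ext_on hbasis
    rintro _ ⟨c, rfl⟩
    simp only [LinearMap.sum_apply, LinearMap.smulRight_apply, LinearMap.id_coe, id_eq, he]
    simp [ite_smul]
  simpa only [LinearMap.sum_apply, LinearMap.smulRight_apply, LinearMap.id_coe, id_eq] using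
    congrArg (fun φ : L →ₗ[ℂ] L => φ x) h

theorem gaudin_sym {M : Type*} [AddCommGroup M] [Module ℂ M]
    (B : LinearMap.BilinForm ℂ L) (hsymm : ∀ x y, B x y = B y x) (e f : ι → L)
    (he : ∀ i j, B (f i) (e j) = if i = j then 1 else 0)
    (hbasis : Submodule.span ℂ (Set.range e) = ⊤) (T : L →ₗ[ℂ] L →ₗ[ℂ] M) :
    ∑ a, T (f a) (e a) = ∑ a, T (e a) (f a) := by
  have hexp := gaudin_expand B e f he hbasis
  calc ∑ a, T (f a) (e a)
      = ∑ a, ∑ b, B (f b) (f a) • T (e b) (e a) := by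
        refine Finset.sum_congr rfl fun a _ => ?_
        conv_lhs => rw [← hexp (f a)]
        simp [map_sum, LinearMap.sum_apply, map_smul, LinearMap.smul_apply]
    _ = ∑ a, ∑ b, B (f b) (f a) • T (e a) (e b) := by
        rw [Finset.sum_comm]
        exact Finset.sum_congr rfl fun a _ => Finset.sum_congr rfl fun b _ => by rw [hsymm]
    _ = ∑ a, T (e a) (f a) := by
        refine Finset.sum_congr rfl fun a _ => ?_
        conv_rhs => rw [← hexp (f a)]
        simp [map_sum, map_smul]

theorem gaudin_inv {M : Type*} [AddCommGroup M] [Module ℂ M]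
    (B : LinearMap.BilinForm ℂ L) (hsymm : ∀ x y, B x y = B y x)
    (hinv : ∀ x y w, B ⁅x, y⁆ w = B x ⁅y, w⁆) (e f : ι → L)
    (he : ∀ i j, B (f i) (e j) = if i = j then 1 else 0)
    (hbasis : Submodule.span ℂ (Set.range e) = ⊤) (T : L →ₗ[ℂ] L →ₗ[ℂ] M) (x : L) :
    ∑ a, T ⁅f a, x⁆ (e a) = ∑ a, T (f a) ⁅x, e a⁆ := by
  have hexp := gaudin_expand B e f he hbasis
  have hf : ∀ b, ∑ a, B (f b) (f a) • e a = f b := by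
    intro b
    conv_rhs => rw [← hexp (f b)]
    exact Finset.sum_congr rfl fun a _ => by rw [hsymm]
  have hcoeff : ∀ a b, B (f b) ⁅f a, x⁆ = B (f a) ⁅x, f b⁆ := fun a b => by
    rw [hsymm, hinv]
  calc ∑ a, T ⁅f a, x⁆ (e a)
      = ∑ a, ∑ b, B (f b) ⁅f a, x⁆ • T (e b) (e a) := by
        refine Finset.sum_congr rfl fun a _ => ?_
        conv_lhs => rw [← hexp ⁅f a, x⁆]
        simp [map_sum, LinearMap.sum_apply, map_smul, LinearMap.smul_apply]
    _ = ∑ b, T (e b) ⁅x, f b⁆ := by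
        rw [Finset.sum_comm]
        refine Finset.sum_congr rfl fun b _ => ?_
        conv_rhs => rw [← hexp ⁅x, f b⁆]
        simp only [map_sum, map_smul]
        exact Finset.sum_congr rfl fun a _ => by rw [hcoeff]
    _ = ∑ a, T (f a) ⁅x, e a⁆ := by
        have hrhs : (∑ a, T (f a) ⁅x, e a⁆) = ∑ a, ∑ b, B (f b) (f a) • T (e b) ⁅x, e a⁆ :=
          Finset.sum_congr rfl fun a _ => by
            conv_lhs => rw [← hexp (f a)]
            simp [map_sum, LinearMap.sum_apply, LinearMap.smul_apply, map_smul]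
        rw [hrhs, Finset.sum_comm]
        refine Finset.sum_congr rfl fun b _ => ?_
        calc T (e b) ⁅x, f b⁆ = T (e b) ⁅x, ∑ a, B (f b) (f a) • e a⁆ := by rw [hf b]
          _ = ∑ a, B (f b) (f a) • T (e b) ⁅x, e a⁆ := by
              rw [gaudin_lie_sum]
              simp [map_sum, map_smul, lie_smul]

end GaudinAux

open DirectSum

theorem gaudin_lie_mul_right {A : Type*} [Ring A] (a b c : A) (h : Commute b c) :
    ⁅a * b, c⁆ = ⁅a, c⁆ * b := by
  rw [Ring.lie_def, Ring.lie_def, sub_mul, mul_assoc, h.eq, ← mul_assoc, ← mul_assoc]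

theorem gaudin_lie_mul_left {A : Type*} [Ring A] (a b c : A) (h : Commute a c) :
    ⁅a * b, c⁆ = a * ⁅b, c⁆ := by
  rw [Ring.lie_def, Ring.lie_def, mul_sub, ← mul_assoc, ← mul_assoc, ← h.eq, mul_assoc, mul_assoc]

theorem gaudin_lie_mul_right' {A : Type*} [Ring A] (a b c : A) (h : Commute c b) :
    ⁅c, a * b⁆ = ⁅c, a⁆ * b := by
  rw [← lie_skew, gaudin_lie_mul_right a b c h.symm, ← lie_skew c a, neg_mul]

/-- The quadratic Gaudin Hamiltonians pairwise commute.  Here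
`U(𝔤)^{⊗N}` is realised as the universal enveloping algebra of the direct sum
`⨁ (i : Fin N), 𝔤` of `N` copies of `𝔤`, and `A^{(i)}` corresponds to
`ι (of i A)`. -/
theorem gaudin_hamiltonians_commute {L : Type*} [LieRing L] [LieAlgebra ℂ L]
    [Module.Finite ℂ L]
    (B : LinearMap.BilinForm ℂ L) (hsymm : ∀ x y, B x y = B y x)
    (hinv : ∀ x y w, B ⁅x, y⁆ w = B x ⁅y, w⁆) (hnd : B.Nondegenerate)
    {ι : Type*} [Fintype ι] [DecidableEq ι]
    (e f : ι → L) (he : ∀ i j, B (f i) (e j) = if i = j then 1 else 0)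
    (hbasis : Submodule.span ℂ (Set.range e) = ⊤)
    (N : ℕ) (z : Fin N → ℂ) (hz : Function.Injective z)
    (H : Fin N → UniversalEnvelopingAlgebra ℂ (⨁ _ : Fin N, L))
    (hH : ∀ i, H i = ∑ j ∈ Finset.univ.erase i, ∑ a : ι, (z i - z j)⁻¹ •
      (UniversalEnvelopingAlgebra.ι ℂ (DirectSum.of (fun _ : Fin N => L) i (f a)) *
        UniversalEnvelopingAlgebra.ι ℂ (DirectSum.of (fun _ : Fin N => L) j (e a)))) :
    ∀ i j, Commute (H i) (H j) := by
  classical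
  intro i j
  rcases eq_or_ne i j with rfl | hij
  · exact Commute.refl _
  rw [commute_iff_lie_eq]
  -- the embeddings of the `N` copies of `L`
  set u : Fin N → L →ₗ[ℂ] UniversalEnvelopingAlgebra ℂ (⨁ _ : Fin N, L) := fun p =>
    (UniversalEnvelopingAlgebra.ι ℂ).toLinearMap ∘ₗ DirectSum.lof ℂ (Fin N) (fun _ => L) p
    with hudef
  have hu : ∀ (p : Fin N) (x : L),
      u p x = UniversalEnvelopingAlgebra.ι ℂ (DirectSum.of (fun _ : Fin N => L) p x) := by
    intro p x
    simp only [hudef, LinearMap.coe_comp, Function.comp_apply, LieHom.coe_toLinearMap,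
      DirectSum.lof_eq_of]
  have ulie : ∀ (p : Fin N) (x y : L), ⁅u p x, u p y⁆ = u p ⁅x, y⁆ := by
    intro p x y
    rw [hu, hu, hu, ← DirectSum.lie_of_same (fun _ : Fin N => L) x y, LieHom.map_lie]
  have ucomm : ∀ {p q : Fin N}, p ≠ q → ∀ x y, Commute (u p x) (u q y) := by
    intro p q hpq x y
    rw [commute_iff_lie_eq, hu, hu, ← LieHom.map_lie,
      DirectSum.lie_of_of_ne (fun _ : Fin N => L) hpq x y, map_zero]
  -- Casimir-type elements
  set Ω : Fin N → Fin N → UniversalEnvelopingAlgebra ℂ (⨁ _ : Fin N, L) := fun p q =>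
    ∑ a, u p (f a) * u q (e a) with hΩ
  have hHΩ : ∀ p, H p = ∑ q ∈ Finset.univ.erase p, (z p - z q)⁻¹ • Ω p q := by
    intro p
    rw [hH p]
    refine Finset.sum_congr rfl fun q _ => ?_
    rw [hΩ, Finset.smul_sum]
    exact Finset.sum_congr rfl fun a _ => by rw [hu, hu]
  have Ωcomm : ∀ {p q r s : Fin N}, p ≠ r → p ≠ s → q ≠ r → q ≠ s →
      Commute (Ω p q) (Ω r s) := by
    intro p q r s h1 h2 h3 h4
    refine Commute.sum_left _ _ _ fun a _ => Commute.sum_right _ _ _ fun b _ => ?_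
    exact Commute.mul_left
      (Commute.mul_right (ucomm h1 _ _) (ucomm h2 _ _))
      (Commute.mul_right (ucomm h3 _ _) (ucomm h4 _ _))
  have Ωsymm : ∀ {p q : Fin N}, p ≠ q → Ω p q = Ω q p := by
    intro p q hpq
    have h1 : Ω p q = ∑ a, ((LinearMap.mul ℂ _).compl₁₂ (u p) (u q)) (f a) (e a) := rfl
    rw [h1, gaudin_sym B hsymm e f he hbasis]
    refine Finset.sum_congr rfl fun a _ => ?_
    show u p (e a) * u q (f a) = u q (f a) * u p (e a)
    exact (ucomm hpq _ _).eq
  have casimir : ∀ {p q : Fin N}, p ≠ q → ∀ x, ⁅Ω p q, u p x + u q x⁆ = 0 := by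
    intro p q hpq x
    have expand : ⁅Ω p q, u p x + u q x⁆
        = ∑ a, (u p ⁅f a, x⁆ * u q (e a) + u p (f a) * u q ⁅e a, x⁆) := by
      rw [hΩ, gaudin_sum_lie]
      refine Finset.sum_congr rfl fun a _ => ?_
      rw [lie_add, gaudin_lie_mul_right _ _ _ (ucomm hpq.symm (e a) x),
        gaudin_lie_mul_left _ _ _ (ucomm hpq (f a) x), ulie, ulie]
    rw [expand, Finset.sum_add_distrib]
    have h1 : ∑ a, u p ⁅f a, x⁆ * u q (e a) = ∑ a, u p (f a) * u q ⁅x, e a⁆ :=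
      gaudin_inv B hsymm hinv e f he hbasis ((LinearMap.mul ℂ _).compl₁₂ (u p) (u q)) x
    have h2 : ∑ a, u p (f a) * u q ⁅e a, x⁆ = -∑ a, u p (f a) * u q ⁅x, e a⁆ := by
      rw [← Finset.sum_neg_distrib]
      refine Finset.sum_congr rfl fun a _ => ?_
      rw [← lie_skew x (e a), map_neg, mul_neg, neg_neg]
    rw [h1, h2, add_neg_cancel]
  have key3 : ∀ {p q r : Fin N}, p ≠ q → p ≠ r → q ≠ r →
      ⁅Ω p q, Ω p r + Ω q r⁆ = 0 := by
    intro p q r hpq hpr hqr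
    have hsum : Ω p r + Ω q r = ∑ a, (u p (f a) + u q (f a)) * u r (e a) := by
      rw [hΩ, ← Finset.sum_add_distrib]
      exact Finset.sum_congr rfl fun a _ => (add_mul _ _ _).symm
    rw [hsum, gaudin_lie_sum]
    refine Finset.sum_eq_zero fun a _ => ?_
    have hcomm : Commute (Ω p q) (u r (e a)) :=
      Commute.sum_left _ _ _ fun b _ =>
        Commute.mul_left (ucomm hpr _ _) (ucomm hqr _ _)
    rw [gaudin_lie_mul_right' _ _ _ hcomm, casimir hpq (f a), zero_mul]
  -- assembling the commutator of the Hamiltonians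
  set g : Fin N → Fin N → UniversalEnvelopingAlgebra ℂ (⨁ _ : Fin N, L) := fun k l =>
    ((z i - z k)⁻¹ * (z j - z l)⁻¹) • ⁅Ω i k, Ω j l⁆ with hg
  have hbrak : ⁅H i, H j⁆ = ∑ k ∈ Finset.univ.erase i, ∑ l ∈ Finset.univ.erase j, g k l := by
    rw [hHΩ i, hHΩ j, gaudin_sum_lie]
    refine Finset.sum_congr rfl fun k _ => ?_
    rw [gaudin_lie_sum]
    refine Finset.sum_congr rfl fun l _ => ?_
    rw [hg, smul_lie, lie_smul, smul_smul]
  have hjmem : j ∈ Finset.univ.erase i := Finset.mem_erase.2 ⟨Ne.symm hij, Finset.mem_univ j⟩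
  have himem : i ∈ Finset.univ.erase j := Finset.mem_erase.2 ⟨hij, Finset.mem_univ i⟩
  have hgji : g j i = 0 := by
    rw [hg]
    have h1 : Ω j i = Ω i j := Ωsymm (Ne.symm hij)
    simp [h1]
  have hrow : ∀ k ∈ (Finset.univ.erase i).erase j,
      (∑ l ∈ Finset.univ.erase j, g k l) = g k i + g k k := by
    intro k hk
    have hkj : k ≠ j := (Finset.mem_erase.1 hk).1
    have hki : k ≠ i := (Finset.mem_erase.1 (Finset.mem_erase.1 hk).2).1
    have hsub : ({i, k} : Finset (Fin N)) ⊆ Finset.univ.erase j := by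
      intro m hm
      rcases Finset.mem_insert.1 hm with rfl | hm
      · exact himem
      · rw [Finset.mem_singleton] at hm
        subst hm
        exact Finset.mem_erase.2 ⟨hkj, Finset.mem_univ _⟩
    rw [← Finset.sum_subset hsub ?_, Finset.sum_pair (Ne.symm hki)]
    intro l hl hlnot
    have hlj : l ≠ j := (Finset.mem_erase.1 hl).1
    have hli : l ≠ i := fun h => hlnot (by simp [h])
    have hlk : l ≠ k := fun h => hlnot (by simp [h])
    have hc : Commute (Ω i k) (Ω j l) := Ωcomm hij (Ne.symm hli) hkj (Ne.symm hlk)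
    rw [hg]
    simp [hc.lie_eq]
  rw [hbrak, ← Finset.add_sum_erase _ _ hjmem, ← Finset.add_sum_erase _ _ himem, hgji, zero_add,
    Finset.sum_congr rfl hrow, Finset.erase_right_comm, ← Finset.sum_add_distrib]
  refine Finset.sum_eq_zero fun m hm => ?_
  have hmi : m ≠ i := (Finset.mem_erase.1 (Finset.mem_erase.1 hm).2).1
  have hmj : m ≠ j := (Finset.mem_erase.1 hm).1
  -- the three remaining terms cancel by the classical Yang--Baxter-type relations
  have h1 : ⁅Ω i j, Ω j m⁆ = -⁅Ω i j, Ω i m⁆ := by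
    have h := key3 hij (Ne.symm hmi) (Ne.symm hmj)
    rw [lie_add] at h
    exact eq_neg_of_add_eq_zero_right h
  have h2 : ⁅Ω i m, Ω j i⁆ = -⁅Ω i j, Ω i m⁆ := by
    rw [Ωsymm (Ne.symm hij)]
    exact (lie_skew _ _).symm
  have h3 : ⁅Ω i m, Ω j m⁆ = ⁅Ω i j, Ω i m⁆ := by
    have h := key3 (Ne.symm hmi) hij hmj
    rw [lie_add, Ωsymm hmj] at h
    rw [eq_neg_of_add_eq_zero_right h]
    exact lie_skew _ _
  have hne1 : z i - z j ≠ 0 := sub_ne_zero.2 fun h => hij (hz h)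
  have hne2 : z i - z m ≠ 0 := sub_ne_zero.2 fun h => hmi (hz h).symm
  have hne3 : z j - z m ≠ 0 := sub_ne_zero.2 fun h => hmj (hz h).symm
  have hne4 : z j - z i ≠ 0 := sub_ne_zero.2 fun h => hij (hz h).symm
  have hsc : ∀ C : UniversalEnvelopingAlgebra ℂ (⨁ _ : Fin N, L),
      ((z i - z j)⁻¹ * (z j - z m)⁻¹) • (-C) + (((z i - z m)⁻¹ * (z j - z i)⁻¹) • (-C)
        + ((z i - z m)⁻¹ * (z j - z m)⁻¹) • C) = 0 := by
    intro C
    rw [smul_neg, smul_neg, ← neg_smul, ← neg_smul, ← add_smul, ← add_smul]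
    convert zero_smul ℂ C using 2
    field_simp
    ring
  calc g j m + (g m i + g m m)
      = ((z i - z j)⁻¹ * (z j - z m)⁻¹) • (-⁅Ω i j, Ω i m⁆)
        + (((z i - z m)⁻¹ * (z j - z i)⁻¹) • (-⁅Ω i j, Ω i m⁆)
        + ((z i - z m)⁻¹ * (z j - z m)⁻¹) • ⁅Ω i j, Ω i m⁆) := by
        rw [hg]
        simp only [h1, h2, h3]
    _ = 0 := hsc _
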